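/- For integers m, n, the assignment x ↦ x^{-1}, y ↦ y z^{1−n}, z ↦ z^{-1} extends to a group isomorphism from H_{m,n} = ⟨x,y,z ∣ x = [x^m,z^n][y,z]⟩ to H_{−m−1,n}. -/

import Mathlib

/-- The commutator convention of the paper: `[a,b] = a⁻¹ b⁻¹ a b`. -/
def cmt {G : Type*} [Group G] (a b : G) : G := a⁻¹ * b⁻¹ * a * b

/-- Relator set of `H_{m,n} = ⟨x,y,z ∣ x = [x^m,z^n][y,z]⟩` (generators `0 ↦ x`,
`1 ↦ y`, `2 ↦ z`). -/
def Hrels (m n : ℤ) : Set (FreeGroup (Fin 3)) :=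
  {(FreeGroup.of 0)⁻¹ *
    (cmt ((FreeGroup.of 0) ^ m) ((FreeGroup.of 2) ^ n) *
      cmt (FreeGroup.of 1) (FreeGroup.of 2))}

/-- The Baumslag group `H_{m,n}`. -/
def Hmn (m n : ℤ) : Type := PresentedGroup (Hrels m n)

instance (m n : ℤ) : Group (Hmn m n) := by unfold Hmn; infer_instance

lemma key {G : Type*} [Group G] (x y z : G) (m n : ℤ)
    (h : x = cmt (x ^ (-m - 1)) (z ^ n) * cmt y z) :
    x⁻¹ = cmt ((x⁻¹) ^ m) ((z⁻¹) ^ n) * cmt (y * z ^ (1 - n)) z⁻¹ := by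
  have hc : cmt y z = (cmt (x ^ (-m - 1)) (z ^ n))⁻¹ * x := eq_inv_mul_iff_mul_eq.mpr h.symm
  have h2 : cmt (y * z ^ (1 - n)) z⁻¹ = z ^ n * (cmt y z)⁻¹ * z ^ (-n) := by
    simp only [cmt]; group
  rw [h2, hc]; simp only [cmt]; group

/-- The defining relation holds in `Hmn a n`. -/
lemma Hrel (a n : ℤ) :
    (PresentedGroup.of 0 : Hmn a n) =
      cmt ((PresentedGroup.of 0 : Hmn a n) ^ a) ((PresentedGroup.of 2) ^ n) *
        cmt (PresentedGroup.of 1) (PresentedGroup.of 2) := by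
  have hm : ((FreeGroup.of 0)⁻¹ *
      (cmt ((FreeGroup.of (0 : Fin 3)) ^ a) ((FreeGroup.of 2) ^ n) *
        cmt (FreeGroup.of 1) (FreeGroup.of 2)))
      ∈ Subgroup.normalClosure (Hrels a n) :=
    Subgroup.subset_normalClosure rfl
  have h1 : (PresentedGroup.mk (Hrels a n)) ((FreeGroup.of 0)⁻¹ *
      (cmt ((FreeGroup.of (0 : Fin 3)) ^ a) ((FreeGroup.of 2) ^ n) *
        cmt (FreeGroup.of 1) (FreeGroup.of 2))) = 1 :=
    (QuotientGroup.eq_one_iff _).2 hm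
  simp only [cmt, map_mul, map_inv, map_zpow] at h1
  exact (inv_mul_eq_one.mp h1)

lemma map_cmt {G H : Type*} [Group G] [Group H] (f : G →* H) (a b : G) :
    f (cmt a b) = cmt (f a) (f b) := by simp [cmt]

/-- Extensionality for homs out of `Hmn`. -/
lemma hom_ext {m n : ℤ} {G : Type*} [Group G] {φ ψ : Hmn m n →* G}
    (h : ∀ i : Fin 3, φ (PresentedGroup.of i) = ψ (PresentedGroup.of i)) : φ = ψ :=
  PresentedGroup.ext h

/-- The images of the generators. -/
def gf (t n : ℤ) : Fin 3 → Hmn t n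
  | 0 => (PresentedGroup.of 0)⁻¹
  | 1 => PresentedGroup.of 1 * PresentedGroup.of 2 ^ (1 - n)
  | 2 => (PresentedGroup.of 2)⁻¹

lemma lift_eq_one (s t n : ℤ) (ht : t = -s - 1) :
    ∀ r ∈ Hrels s n, FreeGroup.lift (gf t n) r = 1 := by
  subst ht
  intro r hr
  rw [Set.mem_singleton_iff.mp hr]
  simp only [map_mul, map_inv, map_zpow, map_cmt, FreeGroup.lift_apply_of]
  have h0 : gf (-s - 1) n 0 = (PresentedGroup.of 0)⁻¹ := rfl
  have h1 : gf (-s - 1) n 1 = PresentedGroup.of 1 * PresentedGroup.of 2 ^ (1 - n) := rfl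
  have h2 : gf (-s - 1) n 2 = (PresentedGroup.of 2)⁻¹ := rfl
  rw [h0, h1, h2]
  exact inv_mul_eq_one.mpr <| key _ _ _ s n (Hrel (-s - 1) n)

/-- The forward homomorphism. -/
def fwd (m n : ℤ) : Hmn m n →* Hmn (-m - 1) n :=
  PresentedGroup.toGroup (lift_eq_one m (-m - 1) n rfl)

/-- The backward homomorphism. -/
def bwd (m n : ℤ) : Hmn (-m - 1) n →* Hmn m n :=
  PresentedGroup.toGroup (lift_eq_one (-m - 1) m n (by ring))

lemma fwd_of (m n : ℤ) (i : Fin 3) :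
    fwd m n (PresentedGroup.of i) = gf (-m - 1) n i := PresentedGroup.toGroup.of _

lemma bwd_of (m n : ℤ) (i : Fin 3) :
    bwd m n (PresentedGroup.of i) = gf m n i := PresentedGroup.toGroup.of _

lemma gf_eqs (t n : ℤ) : gf t n 0 = (show Hmn t n from PresentedGroup.of 0)⁻¹ ∧
    gf t n 1 = (show Hmn t n from PresentedGroup.of 1) * (show Hmn t n from PresentedGroup.of 2) ^ (1 - n) ∧
    gf t n 2 = (show Hmn t n from PresentedGroup.of 2)⁻¹ := ⟨rfl, rfl, rfl⟩

lemma bwd_fwd (m n : ℤ) : (bwd m n).comp (fwd m n) = MonoidHom.id (Hmn m n) := by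
  refine hom_ext fun i => ?_
  show bwd m n (fwd m n (PresentedGroup.of i)) = PresentedGroup.of i
  rcases (by decide : ∀ j : Fin 3, j = 0 ∨ j = 1 ∨ j = 2) i with rfl | rfl | rfl
  · rw [fwd_of, (gf_eqs _ _).1, map_inv (bwd m n), bwd_of, (gf_eqs _ _).1]
    exact inv_inv _
  · rw [fwd_of, (gf_eqs _ _).2.1, map_mul (bwd m n), map_zpow (bwd m n), bwd_of, bwd_of,
      (gf_eqs _ _).2.1, (gf_eqs _ _).2.2]
    dsimp only
    have h := mul_inv_cancel_right (G := Hmn m n) (PresentedGroup.of 1) (PresentedGroup.of 2 ^ (1 - n))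
    exact (congrArg (fun t : Hmn m n => (PresentedGroup.of 1 : Hmn m n) * PresentedGroup.of 2 ^ (1 - n) * t)
      (inv_zpow (α := Hmn m n) (PresentedGroup.of 2) (1 - n))).trans h
  · rw [fwd_of, (gf_eqs _ _).2.2, map_inv (bwd m n), bwd_of, (gf_eqs _ _).2.2]
    exact inv_inv _

lemma fwd_bwd (m n : ℤ) : (fwd m n).comp (bwd m n) = MonoidHom.id (Hmn (-m - 1) n) := by
  refine hom_ext fun i => ?_
  show fwd m n (bwd m n (PresentedGroup.of i)) = PresentedGroup.of i
  rcases (by decide : ∀ j : Fin 3, j = 0 ∨ j = 1 ∨ j = 2) i with rfl | rfl | rfl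
  · rw [bwd_of, (gf_eqs _ _).1, map_inv (fwd m n), fwd_of, (gf_eqs _ _).1]
    exact inv_inv _
  · rw [bwd_of, (gf_eqs _ _).2.1, map_mul (fwd m n), map_zpow (fwd m n), fwd_of, fwd_of,
      (gf_eqs _ _).2.1, (gf_eqs _ _).2.2]
    dsimp only
    have h := mul_inv_cancel_right (G := Hmn (-m - 1) n) (PresentedGroup.of 1) (PresentedGroup.of 2 ^ (1 - n))
    exact (congrArg (fun t : Hmn (-m - 1) n => (PresentedGroup.of 1 : Hmn (-m - 1) n) * PresentedGroup.of 2 ^ (1 - n) * t)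
      (inv_zpow (α := Hmn (-m - 1) n) (PresentedGroup.of 2) (1 - n))).trans h
  · rw [bwd_of, (gf_eqs _ _).2.2, map_inv (fwd m n), fwd_of, (gf_eqs _ _).2.2]
    exact inv_inv _

/-- `x ↦ x⁻¹`, `y ↦ y z^{1-n}`, `z ↦ z⁻¹` extends to an isomorphism
`H_{m,n} ≅ H_{-m-1,n}`. -/
theorem stmt_4 (m n : ℤ) :
    ∃ φ : Hmn m n ≃* Hmn (-m - 1) n,
      φ (PresentedGroup.of 0) = (PresentedGroup.of 0)⁻¹ ∧
      φ (PresentedGroup.of 1) =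
        PresentedGroup.of 1 * (PresentedGroup.of 2 : Hmn (-m - 1) n) ^ (1 - n) ∧
      φ (PresentedGroup.of 2) = (PresentedGroup.of 2)⁻¹ := by
  refine ⟨MonoidHom.toMulEquiv (fwd m n) (bwd m n) (bwd_fwd m n) (fwd_bwd m n), fwd_of m n 0, fwd_of m n 1,
    fwd_of m n 2⟩
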